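/- Let n ≥ 0 and r ≥ 2 be integers. Then the total number of different part sizes in all partitions of n with no part repeated more than r−1 times equals the number of pairs (μ, i) with i ≥ 1 an integer and μ an r-flat partition of n − i satisfying μ_i − μ_{i+1} < r−1 (where μ_j = 0 for j greater than the number of parts of μ): Σ_{λ∈D_r(n)} ℓ̄(λ) = #{(μ, i) : i ≥ 1, μ ∈ F_r(n − i), μ_i − μ_{i+1} < r−1}. -/

import Mathlib

open scoped Classical

namespace BeckPaper

/-- The parts of a partition, sorted in non-increasing order. -/
def partsList {n : ℕ} (p : n.Partition) : List ℕ := p.parts.sort (· ≥ ·)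

/-- The `i`-th part of a partition (`1`-indexed); `0` if `i` exceeds the number of parts. -/
def part {n : ℕ} (p : n.Partition) (i : ℕ) : ℕ := (partsList p).getD (i - 1) 0

/-- `ℓ(λ)`: the number of parts of `λ`. -/
def numParts {n : ℕ} (p : n.Partition) : ℕ := Multiset.card p.parts

/-- `ℓ_t(λ)`: the number of parts of `λ` congruent to `t` modulo `r`. -/
def lMod (r t : ℕ) {n : ℕ} (p : n.Partition) : ℕ :=
  Multiset.card (p.parts.filter (fun x => x % r = t % r))

/-- `ℓ̄_t(λ)`: the number of different part sizes appearing at least `t` times in `λ`. -/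
def lRep (t : ℕ) {n : ℕ} (p : n.Partition) : ℕ :=
  (p.parts.toFinset.filter (fun s => t ≤ p.parts.count s)).card

/-- `ℓ̄(λ)`: the number of different part sizes of `λ`. -/
def lDist {n : ℕ} (p : n.Partition) : ℕ := p.parts.toFinset.card

/-- `d_t(λ)`: the number of indices `1 ≤ i ≤ ℓ(λ)` with `λ_i − λ_{i+1} ≥ t`. -/
def dCount (t : ℕ) {n : ℕ} (p : n.Partition) : ℕ :=
  ((Finset.Icc 1 (numParts p)).filter (fun i => t ≤ part p i - part p (i + 1))).card

/-- `λ ∈ O_r(n)`: no part is divisible by `r`. -/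
def IsRegular (r : ℕ) {n : ℕ} (p : n.Partition) : Prop := ∀ x ∈ p.parts, ¬ r ∣ x

/-- `λ ∈ D_r(n)`: no part appears more than `r − 1` times. -/
def IsRestricted (r : ℕ) {n : ℕ} (p : n.Partition) : Prop :=
  ∀ s : ℕ, p.parts.count s ≤ r - 1

/-- `λ ∈ F_r(n)`: all differences of consecutive parts (with `λ_{k+1} = 0`) are `≤ r − 1`. -/
def IsFlat (r : ℕ) {n : ℕ} (p : n.Partition) : Prop :=
  ∀ i, 1 ≤ i → i ≤ numParts p → part p i - part p (i + 1) ≤ r - 1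

/-- `λ ∈ O_{1,r}(n)`: the set of part sizes divisible by `r` has exactly one element. -/
def IsOneRegular (r : ℕ) {n : ℕ} (p : n.Partition) : Prop :=
  (p.parts.toFinset.filter (fun s => r ∣ s)).card = 1

/-- `λ ∈ D_{1,r}(n)`: exactly one part size appears at least `r` times. -/
def IsOneRestricted (r : ℕ) {n : ℕ} (p : n.Partition) : Prop :=
  (p.parts.toFinset.filter (fun s => r ≤ p.parts.count s)).card = 1

/-- `λ ∈ F_{1,r}(n)`: exactly one difference of consecutive parts is `≥ r`, and all
other such differences are `≤ r − 1`. -/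
def IsOneFlat (r : ℕ) {n : ℕ} (p : n.Partition) : Prop :=
  ∃ i, (1 ≤ i ∧ i ≤ numParts p ∧ r ≤ part p i - part p (i + 1)) ∧
    ∀ j, 1 ≤ j → j ≤ numParts p → j ≠ i → part p j - part p (j + 1) ≤ r - 1

/-- `λ ∈ T_r(n)`: exactly one part size has multiplicity at least `r`, and that
multiplicity is strictly less than `2r`. -/
def IsInT (r : ℕ) {n : ℕ} (p : n.Partition) : Prop :=
  ∃ s : ℕ, (r ≤ p.parts.count s ∧ p.parts.count s < 2 * r) ∧
    ∀ s' : ℕ, r ≤ p.parts.count s' → s' = s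

lemma filter_card_split (s : Multiset ℕ) (j : ℕ) :
    Multiset.card (s.filter (fun x => j ≤ x)) =
      Multiset.card (s.filter (fun x => j+1 ≤ x)) + s.count j := by
  induction s using Multiset.induction with
  | empty => simp
  | cons a t ih =>
    rcases Nat.lt_trichotomy j a with h | h | h
    · have h1 : j ≤ a := by omega
      have h2 : j + 1 ≤ a := by omega
      have h3 : j ≠ a := by omega
      simp [Multiset.filter_cons, Multiset.count_cons, h1, h2, h3, h, ih]
      omega
    · subst h
      have h2 : ¬ (j + 1 ≤ j) := by omega
      simp [Multiset.filter_cons, Multiset.count_cons, h2, ih]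
      omega
    · have h1 : ¬ (j ≤ a) := by omega
      have h2 : ¬ (j + 1 ≤ a) := by omega
      have h3 : j ≠ a := by omega
      simp [Multiset.filter_cons, Multiset.count_cons, h1, h2, h3, ih]
      omega

lemma sum_filter_card (s : Multiset ℕ) (N : ℕ) (hN : ∀ x ∈ s, x ≤ N) :
    ∑ k ∈ Finset.range N, Multiset.card (s.filter (fun x => k+1 ≤ x)) = s.sum := by
  induction s using Multiset.induction with
  | empty => simp
  | cons a t ih =>
    have ha : a ≤ N := hN a (Multiset.mem_cons_self a t)
    have ht : ∀ x ∈ t, x ≤ N := fun x hx => hN x (Multiset.mem_cons_of_mem hx)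
    simp only [Multiset.filter_cons, Multiset.sum_cons]
    have : ∀ k, Multiset.card ((if k+1 ≤ a then {a} else 0) + t.filter (fun x => k+1 ≤ x))
        = (if k ∈ Finset.range a then 1 else 0) + Multiset.card (t.filter (fun x => k+1 ≤ x)) := by
      intro k
      by_cases h : k + 1 ≤ a
      · have : k ∈ Finset.range a := Finset.mem_range.mpr (by omega)
        simp [h, this]; omega
      · have : k ∉ Finset.range a := by simp [Finset.mem_range]; omega
        simp [h, this]
    rw [Finset.sum_congr rfl (fun k _ => this k), Finset.sum_add_distrib, ih ht,
      Finset.sum_ite_mem]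
    have : Finset.range N ∩ Finset.range a = Finset.range a := by
      ext x; simp [Finset.mem_range]; omega
    simp [this]


lemma sorted_getD_le_iff (L : List ℕ) (hL : L.Pairwise (· ≥ ·)) :
    ∀ j i : ℕ, 1 ≤ j → 1 ≤ i →
      (i ≤ L.getD (j-1) 0 ↔ j ≤ Multiset.card (Multiset.filter (fun x => i ≤ x) (↑L : Multiset ℕ))) := by
  induction L with
  | nil =>
    intro j i hj hi
    simp only [List.getD_nil]
    constructor
    · omega
    · intro h; simp at h; omega
  | cons a t ih =>
    intro j i hj hi
    rw [List.pairwise_cons] at hL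
    obtain ⟨ha, ht⟩ := hL
    have key : Multiset.filter (fun x => i ≤ x) (↑(a :: t) : Multiset ℕ)
        = (if i ≤ a then {a} else 0) + Multiset.filter (fun x => i ≤ x) (↑t : Multiset ℕ) := by
      rw [← Multiset.cons_coe, Multiset.filter_cons]
    have hc0 : ¬ i ≤ a → Multiset.card (Multiset.filter (fun x => i ≤ x) (↑t : Multiset ℕ)) = 0 := by
      intro h
      rw [Multiset.card_eq_zero, Multiset.filter_eq_nil]
      intro x hx
      have := ha x (by exact_mod_cast hx)
      omega
    rcases Nat.eq_or_lt_of_le hj with h1 | h1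
    · -- j = 1
      obtain rfl : j = 1 := h1.symm
      rw [key]
      simp only [Nat.sub_self, List.getD_cons_zero]
      by_cases h : i ≤ a
      · simp [h]
      · simp [h, hc0 h]
        intro x hx
        have := ha x hx
        omega
    · -- j ≥ 2
      obtain ⟨j', rfl⟩ : ∃ j', j = j' + 1 := ⟨j - 1, by omega⟩
      have hj' : 1 ≤ j' := by omega
      have hget : (a :: t).getD (j' + 1 - 1) 0 = t.getD (j' - 1) 0 := by
        have : j' + 1 - 1 = (j' - 1) + 1 := by omega
        rw [this, List.getD_cons_succ]
      rw [hget, key]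
      by_cases h : i ≤ a
      · simp only [h, if_pos]
        rw [ih ht j' i hj' hi]
        simp
      · have hcc := hc0 h
        simp only [if_neg h, hcc, Multiset.card_add, Multiset.card_zero]
        constructor
        · intro hle
          exfalso
          by_cases hlen : j' - 1 < t.length
          · have : t.getD (j' - 1) 0 = t.get ⟨j' - 1, hlen⟩ := List.getD_eq_get t 0 ⟨j' - 1, hlen⟩
            have hmem : t.get ⟨j' - 1, hlen⟩ ∈ t := t.get_mem _
            have := ha _ hmem
            omega
          · rw [List.getD_eq_default] at hle
            · omega
            · omega
        · omega




def cnt {n : ℕ} (p : n.Partition) (j : ℕ) : ℕ :=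
  Multiset.card (p.parts.filter (fun x => j ≤ x))

lemma coe_partsList {n : ℕ} (p : n.Partition) : (↑(partsList p) : Multiset ℕ) = p.parts :=
  Multiset.sort_eq _ _

lemma partsList_sorted {n : ℕ} (p : n.Partition) : (partsList p).Pairwise (· ≥ ·) :=
  Multiset.pairwise_sort _ _

lemma length_partsList {n : ℕ} (p : n.Partition) : (partsList p).length = numParts p := by
  rw [← Multiset.coe_card, coe_partsList]; rfl

lemma le_part_iff {n : ℕ} (p : n.Partition) {j i : ℕ} (hj : 1 ≤ j) (hi : 1 ≤ i) :
    i ≤ part p j ↔ j ≤ cnt p i := by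
  have := sorted_getD_le_iff (partsList p) (partsList_sorted p) j i hj hi
  rw [coe_partsList] at this
  exact this

lemma le_max_of_mem {n : ℕ} (p : n.Partition) {x : ℕ} (hx : x ∈ p.parts) : x ≤ part p 1 := by
  have hx1 : 1 ≤ x := p.parts_pos hx
  rw [le_part_iff p le_rfl hx1]
  have : x ∈ p.parts.filter (fun y => x ≤ y) := Multiset.mem_filter.mpr ⟨hx, le_rfl⟩
  exact Multiset.card_pos_iff_exists_mem.mpr ⟨x, this⟩

lemma cnt_anti {n : ℕ} (p : n.Partition) {j k : ℕ} (h : j ≤ k) : cnt p k ≤ cnt p j :=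
  Multiset.card_le_card (Multiset.monotone_filter_right _ (fun x hx => le_trans h hx))

lemma cnt_eq_zero {n : ℕ} (p : n.Partition) {i : ℕ} (hi : part p 1 < i) : cnt p i = 0 := by
  unfold cnt
  rw [Multiset.card_eq_zero, Multiset.filter_eq_nil]
  intro x hx
  have := le_max_of_mem p hx
  omega

lemma part_anti {n : ℕ} (p : n.Partition) {j k : ℕ} (hj : 1 ≤ j) (hjk : j ≤ k) :
    part p k ≤ part p j := by
  rcases Nat.eq_zero_or_pos (part p k) with h | h
  · omega
  · have hk1 : 1 ≤ k := le_trans hj hjk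
    have h1 : k ≤ cnt p (part p k) := (le_part_iff p hk1 h).mp le_rfl
    exact (le_part_iff p hj h).mpr (le_trans hjk h1)

def conjList {n : ℕ} (p : n.Partition) : List ℕ :=
  (List.range (part p 1)).map (fun k => cnt p (k+1))

lemma conjList_sorted {n : ℕ} (p : n.Partition) : (conjList p).Pairwise (· ≥ ·) := by
  unfold conjList
  refine List.Pairwise.map _ ?_ List.pairwise_lt_range
  intro a b hab
  exact cnt_anti p (by omega)

def conj {n : ℕ} (p : n.Partition) : n.Partition where
  parts := (↑(conjList p) : Multiset ℕ)
  parts_pos := by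
    intro i hi
    simp only [conjList, Multiset.mem_coe, List.mem_map, List.mem_range] at hi
    obtain ⟨k, hk, rfl⟩ := hi
    have : k + 1 ≤ part p 1 := hk
    have := (le_part_iff p le_rfl (by omega)).mp this
    omega
  parts_sum := by
    have h1 := sum_filter_card p.parts (part p 1) (fun x hx => le_max_of_mem p hx)
    have h2 : (↑(conjList p) : Multiset ℕ).sum
        = ∑ k ∈ Finset.range (part p 1), Multiset.card (p.parts.filter (fun x => k+1 ≤ x)) := by
      simp only [conjList]
      rw [Finset.sum, Finset.range_val, ← Multiset.map_coe]
      rfl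
    rw [h2, h1, p.parts_sum]

lemma parts_conj {n : ℕ} (p : n.Partition) : (conj p).parts = (↑(conjList p) : Multiset ℕ) := rfl

lemma partsList_conj {n : ℕ} (p : n.Partition) : partsList (conj p) = conjList p := by
  refine List.Perm.eq_of_pairwise' (partsList_sorted _) (conjList_sorted p) ?_
  rw [← Multiset.coe_eq_coe, coe_partsList, parts_conj]

lemma length_conjList {n : ℕ} (p : n.Partition) : (conjList p).length = part p 1 := by
  simp [conjList]

lemma part_conj {n : ℕ} (p : n.Partition) {j : ℕ} (hj : 1 ≤ j) :
    part (conj p) j = cnt p j := by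
  rw [part, partsList_conj]
  by_cases h : j - 1 < (conjList p).length
  · rw [List.getD_eq_getElem _ _ h]
    have hlt : j - 1 < (List.range (part p 1)).length := by
      simpa [conjList] using h
    simp only [conjList, List.getElem_map, List.getElem_range]
    congr 1
    omega
  · rw [List.getD_eq_default _ _ (by omega)]
    rw [length_conjList] at h
    exact (cnt_eq_zero p (by omega)).symm

lemma card_filter_range_map (f : ℕ → ℕ) (q : ℕ → Prop) [DecidablePred q] :
    ∀ N c : ℕ, c ≤ N → (∀ k, k < N → (q (f k) ↔ k < c)) →
      Multiset.card (Multiset.filter q (↑((List.range N).map f) : Multiset ℕ)) = c := by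
  intro N
  induction N with
  | zero => intro c hc _; simp; omega
  | succ N ih =>
    intro c hc hq
    rw [List.range_succ, List.map_append, List.map_singleton]
    have : (↑(((List.range N).map f) ++ [f N]) : Multiset ℕ)
        = (↑((List.range N).map f) : Multiset ℕ) + (↑([f N]) : Multiset ℕ) := by
      rw [← Multiset.coe_add]
    rw [this, Multiset.filter_add, Multiset.card_add]
    rcases Nat.lt_or_ge c (N+1) with h | h
    · have hc' : c ≤ N := by omega
      have h2 : ¬ q (f N) := by rw [hq N (by omega)]; omega
      rw [ih c hc' (fun k hk => hq k (by omega))]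
      simp [Multiset.filter_eq_nil, h2]
    · have hcN : c = N + 1 := by omega
      subst hcN
      have h2 : q (f N) := by rw [hq N (by omega)]; omega
      rw [ih N le_rfl (fun k hk => by rw [hq k (by omega)]; omega)]
      have : (↑[f N] : Multiset ℕ) = {f N} := rfl
      rw [this, Multiset.filter_singleton, if_pos h2]
      simp

lemma cnt_conj {n : ℕ} (p : n.Partition) {j : ℕ} (hj : 1 ≤ j) :
    cnt (conj p) j = part p j := by
  unfold cnt
  rw [parts_conj]
  unfold conjList
  refine card_filter_range_map _ _ (part p 1) (part p j) (part_anti p le_rfl hj) ?_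
  intro k _
  constructor
  · intro h
    have := (le_part_iff p hj (Nat.succ_le_succ (Nat.zero_le k))).mpr h
    omega
  · intro h
    exact (le_part_iff p hj (Nat.succ_le_succ (Nat.zero_le k))).mp (by omega)

lemma count_parts_eq {n : ℕ} (p : n.Partition) (s : ℕ) :
    p.parts.count s = cnt p s - cnt p (s+1) := by
  have := filter_card_split p.parts s
  unfold cnt
  omega

lemma count_conj_parts {n : ℕ} (p : n.Partition) {s : ℕ} (hs : 1 ≤ s) :
    (conj p).parts.count s = part p s - part p (s+1) := by
  rw [count_parts_eq, cnt_conj p hs, cnt_conj p (by omega)]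

lemma conj_conj {n : ℕ} (p : n.Partition) : conj (conj p) = p := by
  ext1
  ext s
  rcases Nat.eq_zero_or_pos s with rfl | hs
  · rw [Multiset.count_eq_zero_of_notMem, Multiset.count_eq_zero_of_notMem]
    · intro h; exact absurd (p.parts_pos h) (by omega)
    · intro h; exact absurd ((conj (conj p)).parts_pos h) (by omega)
  · rw [count_conj_parts (conj p) hs, part_conj p hs, part_conj p (by omega : 1 ≤ s + 1),
      count_parts_eq]

lemma numParts_conj {n : ℕ} (p : n.Partition) : numParts (conj p) = part p 1 := by
  rw [numParts, parts_conj, Multiset.coe_card, length_conjList]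

lemma part_sub_succ_conj {n : ℕ} (κ : n.Partition) {s : ℕ} (hs : 1 ≤ s) :
    part (conj κ) s - part (conj κ) (s+1) = κ.parts.count s := by
  rw [part_conj κ hs, part_conj κ (by omega : 1 ≤ s + 1), count_parts_eq]

lemma isFlat_conj_iff {r n : ℕ} (κ : n.Partition) : IsFlat r (conj κ) ↔ IsRestricted r κ := by
  constructor
  · intro h s
    rcases Nat.eq_zero_or_pos s with rfl | hs
    · rw [Multiset.count_eq_zero_of_notMem (fun hmem => by exact absurd (κ.parts_pos hmem) (by omega))]
      omega
    · by_cases hs2 : s ≤ part κ 1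
      · have := h s hs (by rw [numParts_conj]; exact hs2)
        rw [part_sub_succ_conj κ hs] at this
        exact this
      · rw [Multiset.count_eq_zero_of_notMem (fun hmem => hs2 (le_max_of_mem κ hmem))]
        omega
  · intro h i hi1 _
    rw [part_sub_succ_conj κ hi1]
    exact h i

lemma isRestricted_conj_of_isFlat {r n : ℕ} {μ : n.Partition} (h : IsFlat r μ) :
    IsRestricted r (conj μ) := by
  refine (isFlat_conj_iff (conj μ)).mp ?_
  rw [conj_conj]
  exact h

lemma part_sub_succ_eq_count_conj {n : ℕ} (μ : n.Partition) {s : ℕ} (hs : 1 ≤ s) :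
    part μ s - part μ (s+1) = (conj μ).parts.count s := by
  rw [count_conj_parts μ hs]

def glue {m : ℕ} (μ : m.Partition) (i n : ℕ) (hi : 0 < i) (h : m + i = n) : n.Partition where
  parts := i ::ₘ (conj μ).parts
  parts_pos := by
    intro x hx
    rcases Multiset.mem_cons.mp hx with rfl | hx'
    · exact hi
    · exact (conj μ).parts_pos hx'
  parts_sum := by
    rw [Multiset.sum_cons, (conj μ).parts_sum]
    omega

theorem dist_restricted_eq_pairs (n r : ℕ) (hr : 2 ≤ r) :
    (∑ p ∈ Finset.univ.filter (fun p : n.Partition => IsRestricted r p), lDist p) =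
      Nat.card {x : Σ m : ℕ, m.Partition × ℕ //
        IsFlat r x.2.1 ∧ 1 ≤ x.2.2 ∧ x.1 + x.2.2 = n ∧
          part x.2.1 x.2.2 - part x.2.1 (x.2.2 + 1) < r - 1} := by
  classical
  set S := Finset.univ.filter (fun p : n.Partition => IsRestricted r p) with hS
  set T : Finset (Σ _p : n.Partition, ℕ) := S.sigma (fun p => p.parts.toFinset) with hT
  have hL : (∑ p ∈ S, lDist p) = T.card := by
    rw [hT, Finset.card_sigma]
    rfl
  rw [hL, ← Nat.card_eq_finsetCard]
  have hf : ∀ x : {x : Σ m : ℕ, m.Partition × ℕ //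
      IsFlat r x.2.1 ∧ 1 ≤ x.2.2 ∧ x.1 + x.2.2 = n ∧
        part x.2.1 x.2.2 - part x.2.1 (x.2.2 + 1) < r - 1},
      (⟨glue x.1.2.1 x.1.2.2 n x.2.2.1 x.2.2.2.1, x.1.2.2⟩ : Σ _p : n.Partition, ℕ) ∈ T := by
    rintro ⟨⟨m, μ, i⟩, hflat, hi, hsum, hdiff⟩
    dsimp only at hflat hi hsum hdiff ⊢
    rw [hT, Finset.mem_sigma]
    constructor
    · rw [hS, Finset.mem_filter]
      refine ⟨Finset.mem_univ _, ?_⟩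
      intro a
      have hres := isRestricted_conj_of_isFlat hflat
      have hcount : (conj μ).parts.count i < r - 1 := by
        rw [← part_sub_succ_eq_count_conj μ hi]
        exact hdiff
      show ((glue μ i n hi hsum).parts).count a ≤ r - 1
      show ((i ::ₘ (conj μ).parts)).count a ≤ r - 1
      rw [Multiset.count_cons]
      by_cases ha : a = i
      · subst ha
        simp only [if_pos rfl, if_true, eq_self_iff_true]
        omega
      · simp only [if_neg ha]
        have := hres a
        omega
    · show i ∈ (glue μ i n hi hsum).parts.toFinset
      rw [Multiset.mem_toFinset]
      show i ∈ i ::ₘ (conj μ).parts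
      exact Multiset.mem_cons_self _ _
  let f : {x : Σ m : ℕ, m.Partition × ℕ //
      IsFlat r x.2.1 ∧ 1 ≤ x.2.2 ∧ x.1 + x.2.2 = n ∧
        part x.2.1 x.2.2 - part x.2.1 (x.2.2 + 1) < r - 1} → ↥T :=
    fun x => ⟨⟨glue x.1.2.1 x.1.2.2 n x.2.2.1 x.2.2.2.1, x.1.2.2⟩, hf x⟩
  have hinj : Function.Injective f := by
    rintro ⟨⟨mx, μx, ix⟩, hxflat, hxi, hxsum, hxdiff⟩ ⟨⟨my, μy, iy⟩, hyflat, hyi, hysum, hydiff⟩ hxy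
    have hxy' : (⟨glue μx ix n hxi hxsum, ix⟩ : Σ _p : n.Partition, ℕ)
        = ⟨glue μy iy n hyi hysum, iy⟩ := congrArg Subtype.val hxy
    have hixy : ix = iy := congrArg Sigma.snd hxy'
    subst hixy
    have hglue : glue μx ix n hxi hxsum = glue μy ix n hyi hysum := congrArg Sigma.fst hxy'
    have hparts : ix ::ₘ (conj μx).parts = ix ::ₘ (conj μy).parts :=
      congrArg (fun q : n.Partition => q.parts) hglue
    rw [Multiset.cons_inj_right] at hparts
    have hm : mx = my := by
      rw [← (conj μx).parts_sum, ← (conj μy).parts_sum, hparts]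
    subst hm
    have hconj : conj μx = conj μy := Nat.Partition.ext hparts
    have hμ : μx = μy := by
      rw [← conj_conj μx, hconj, conj_conj]
    subst hμ
    rfl
  have hsurj : Function.Surjective f := by
    rintro ⟨⟨p, s⟩, hy⟩
    rw [hT, Finset.mem_sigma, hS, Finset.mem_filter] at hy
    obtain ⟨⟨-, hres⟩, hmem⟩ := hy
    dsimp only at hres hmem
    have hs : s ∈ p.parts := Multiset.mem_toFinset.mp hmem
    have hs1 : 0 < s := p.parts_pos hs
    have hsn : s ≤ n := by
      have := Multiset.single_le_sum (fun x _ => Nat.zero_le x) s hs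
      rw [p.parts_sum] at this
      exact this
    have hesum : (p.parts.erase s).sum = n - s := by
      have h1 := congrArg Multiset.sum (Multiset.cons_erase hs)
      rw [Multiset.sum_cons, p.parts_sum] at h1
      omega
    let κ : (n - s).Partition :=
      ⟨p.parts.erase s, fun hx => p.parts_pos (Multiset.mem_of_mem_erase hx), hesum⟩
    have hκcount : ∀ a, κ.parts.count a ≤ p.parts.count a := by
      intro a
      show (p.parts.erase s).count a ≤ _
      by_cases ha : a = s
      · subst ha
        rw [Multiset.count_erase_self]
        omega
      · rw [Multiset.count_erase_of_ne ha]
    have hκres : IsRestricted r κ := fun a => le_trans (hκcount a) (hres a)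
    have hκs : κ.parts.count s < r - 1 := by
      show (p.parts.erase s).count s < r - 1
      rw [Multiset.count_erase_self]
      have h1 : 1 ≤ p.parts.count s := Multiset.one_le_count_iff_mem.mpr hs
      have h2 := hres s
      omega
    refine ⟨⟨⟨n - s, conj κ, s⟩, ?_, hs1, ?_, ?_⟩, ?_⟩
    · exact (isFlat_conj_iff κ).mpr hκres
    · show n - s + s = n
      omega
    · show part (conj κ) s - part (conj κ) (s + 1) < r - 1
      rw [part_sub_succ_conj κ hs1]
      exact hκs
    · apply Subtype.ext
      show (⟨glue (conj κ) s n hs1 (by omega), s⟩ : Σ _p : n.Partition, ℕ) = ⟨p, s⟩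
      have hgp : glue (conj κ) s n hs1 (by omega) = p := by
        apply Nat.Partition.ext
        show s ::ₘ (conj (conj κ)).parts = p.parts
        rw [conj_conj]
        exact Multiset.cons_erase hs
      rw [hgp]
  exact Nat.card_congr ((Equiv.ofBijective f ⟨hinj, hsurj⟩).symm)


end BeckPaper
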